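/- Let A = {a,b,c,d} and let R19 be the 4-agent profile with ≿_1: {a,b} ≻ {c,d}; ≿_2: {c,d} ≻ {a,b}; ≿_3: {b,d} ≻ a ≻ c; ≿_4: {a,c} ≻ {b,d}. Then the lottery (1/2)a + (1/2)d stochastically dominates the lottery (1/2)b + (1/2)c for every agent, and strictly for some agent; consequently every SD-efficient lottery p at R19 satisfies p(b) = 0 or p(c) = 0. -/

import Mathlib

open Classical

noncomputable section

variable {A : Type*} [Fintype A]

/-- A (weak) preference relation: complete and transitive. -/
def IsPref (r : A → A → Prop) : Prop :=
  (∀ x y, r x y ∨ r y x) ∧ ∀ x y z, r x y → r y z → r x z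

/-- A lottery over the alternatives. -/
def Lottery (A : Type*) [Fintype A] :=
  {p : A → ℝ // (∀ x, 0 ≤ p x) ∧ ∑ x, p x = 1}

/-- Probability that lottery `p` yields an alternative at least as good as `x` w.r.t. `r`. -/
def upperSum (r : A → A → Prop) (p : Lottery A) (x : A) : ℝ :=
  ∑ y, if r y x then p.1 y else 0

/-- `p` (weakly) stochastically dominates `q` w.r.t. the preference relation `r`. -/
def SDGe (r : A → A → Prop) (p q : Lottery A) : Prop :=
  ∀ x, upperSum r q x ≤ upperSum r p x

/-- Strict stochastic dominance. -/
def SDGt (r : A → A → Prop) (p q : Lottery A) : Prop :=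
  SDGe r p q ∧ ¬ SDGe r q p

/-- A profile assigning a preference relation to each of `n` agents; validity. -/
def ValidProfile {n : ℕ} (R : Fin n → A → A → Prop) : Prop :=
  ∀ i, IsPref (R i)

/-- `p` is SD-efficient at profile `R`. -/
def SDEfficientAt {n : ℕ} (R : Fin n → A → A → Prop) (p : Lottery A) : Prop :=
  ¬ ∃ q : Lottery A, (∀ i, SDGe (R i) q p) ∧ ∃ i, SDGt (R i) q p

def Anonymous {n : ℕ} (f : (Fin n → A → A → Prop) → Lottery A) : Prop :=
  ∀ R : Fin n → A → A → Prop, ValidProfile R →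
    ∀ σ : Equiv.Perm (Fin n), f (R ∘ σ) = f R

/-- Relabel a preference relation by a permutation of the alternatives. -/
def relabel (π : Equiv.Perm A) (r : A → A → Prop) : A → A → Prop :=
  fun x y => r (π.symm x) (π.symm y)

def relabelProfile {n : ℕ} (π : Equiv.Perm A) (R : Fin n → A → A → Prop) :
    Fin n → A → A → Prop :=
  fun i => relabel π (R i)

def Neutral {n : ℕ} (f : (Fin n → A → A → Prop) → Lottery A) : Prop :=
  ∀ R : Fin n → A → A → Prop, ValidProfile R →
    ∀ (π : Equiv.Perm A) (x : A), (f (relabelProfile π R)).1 (π x) = (f R).1 x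

def Efficient {n : ℕ} (f : (Fin n → A → A → Prop) → Lottery A) : Prop :=
  ∀ R : Fin n → A → A → Prop, ValidProfile R → SDEfficientAt R (f R)

def Strategyproof {n : ℕ} (f : (Fin n → A → A → Prop) → Lottery A) : Prop :=
  ¬ ∃ (R : Fin n → A → A → Prop) (i : Fin n) (r : A → A → Prop),
      ValidProfile R ∧ IsPref r ∧ SDGt (R i) (f (Function.update R i r)) (f R)


/-- The preference relation induced by a rank function (lower rank = better). -/
def prefOfRank (ρ : Fin 4 → ℕ) : Fin 4 → Fin 4 → Prop := fun x y => ρ x ≤ ρ y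

/-- Profile `R19`: with `a = 0`, `b = 1`, `c = 2`, `d = 3`;
`≿₁: {a,b},{c,d}`, `≿₂: {c,d},{a,b}`, `≿₃: {b,d},a,c`, `≿₄: {a,c},{b,d}`. -/
def R19 : Fin 4 → Fin 4 → Fin 4 → Prop :=
  ![prefOfRank ![0, 0, 1, 1], prefOfRank ![1, 1, 0, 0],
    prefOfRank ![1, 0, 2, 0], prefOfRank ![0, 1, 0, 1]]

/-- The lottery `1/2 a + 1/2 d`. -/
def pAD : Lottery (Fin 4) :=
  ⟨![1/2, 0, 0, 1/2], by
    refine ⟨fun x => ?_, ?_⟩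
    · fin_cases x <;> norm_num
    · norm_num [Fin.sum_univ_succ]⟩

/-- The lottery `1/2 b + 1/2 c`. -/
def pBC : Lottery (Fin 4) :=
  ⟨![0, 1/2, 1/2, 0], by
    refine ⟨fun x => ?_, ?_⟩
    · fin_cases x <;> norm_num
    · norm_num [Fin.sum_univ_succ]⟩

/-- At `R19`, `1/2 a + 1/2 d` stochastically dominates `1/2 b + 1/2 c` for every agent,
strictly for some agent; hence every SD-efficient lottery at `R19` puts probability zero on
`b` or on `c`. -/
theorem R19_bc_inefficient_support :
    (∀ i : Fin 4, SDGe (R19 i) pAD pBC) ∧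
    (∃ i : Fin 4, SDGt (R19 i) pAD pBC) ∧
    (∀ p : Lottery (Fin 4), SDEfficientAt R19 p → p.1 1 = 0 ∨ p.1 2 = 0) := by
  refine ⟨?_, ?_, ?_⟩
  · intro i x
    fin_cases i <;> fin_cases x <;>
      simp [upperSum, Fin.sum_univ_four, R19, prefOfRank, pAD, pBC]
  · refine ⟨2, ?_, ?_⟩
    · intro x
      fin_cases x <;>
        simp [upperSum, Fin.sum_univ_four, R19, prefOfRank, pAD, pBC]
    · intro h
      have := h 0
      simp [upperSum, Fin.sum_univ_four, R19, prefOfRank, pAD, pBC] at this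
      norm_num at this
  · intro p hp
    by_contra hc
    push_neg at hc
    obtain ⟨hb, hcc⟩ := hc
    have hb' : 0 < p.1 1 := lt_of_le_of_ne (p.2.1 1) (Ne.symm hb)
    have hc' : 0 < p.1 2 := lt_of_le_of_ne (p.2.1 2) (Ne.symm hcc)
    set ε : ℝ := min (p.1 1) (p.1 2) with hε
    have hε0 : 0 < ε := lt_min hb' hc'
    have hεb : ε ≤ p.1 1 := min_le_left _ _
    have hεc : ε ≤ p.1 2 := min_le_right _ _
    have hq : (∀ x, 0 ≤ (fun x => p.1 x + ε * (![(1:ℝ), -1, -1, 1] x)) x) ∧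
        ∑ x, (fun x => p.1 x + ε * (![(1:ℝ), -1, -1, 1] x)) x = 1 := by
      constructor
      · intro x
        have h0 := p.2.1 0
        have h3 := p.2.1 3
        fin_cases x <;> simp <;> linarith
      · have := p.2.2
        rw [Fin.sum_univ_four] at this ⊢
        simp
        linarith
    apply hp
    refine ⟨⟨fun x => p.1 x + ε * (![(1:ℝ), -1, -1, 1] x), hq⟩, ?_, 2, ?_, ?_⟩
    · intro i x
      fin_cases i <;> fin_cases x <;>
        simp [upperSum, Fin.sum_univ_four, R19, prefOfRank] <;> linarith
    · intro x
      fin_cases x <;>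
        simp [upperSum, Fin.sum_univ_four, R19, prefOfRank] <;> linarith
    · intro h
      have := h 0
      simp [upperSum, Fin.sum_univ_four, R19, prefOfRank] at this
      linarith

end
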